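/- For fixed L > 0, n ≥ 2, and k > 0, the function F(a,b) = ∫_0^a ∫_0^b sinh^{n-1}(k(x+y)) dx dy, maximized over a, b ≥ 0 subject to a + b = L, attains its maximum exactly at a = b = L/2. -/
import Mathlib

open intervalIntegral

/- STATEMENT 3: F(a,b) = ∫_0^a ∫_0^b sinh^{n-1}(k(x+y)) dx dy on the segment
   {a,b ≥ 0, a+b = L} attains its maximum exactly at a = b = L/2. -/
theorem stmt3 (L : ℝ) (hL : 0 < L) (n : ℕ) (hn : 2 ≤ n) (k : ℝ) (hk : 0 < k) :
    ∀ a b : ℝ, 0 ≤ a → 0 ≤ b → a + b = L → (a, b) ≠ (L / 2, L / 2) →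
      (∫ x in (0:ℝ)..a, ∫ y in (0:ℝ)..b, Real.sinh (k * (x + y)) ^ (n - 1)) <
      ∫ x in (0:ℝ)..(L / 2), ∫ y in (0:ℝ)..(L / 2),
        Real.sinh (k * (x + y)) ^ (n - 1) := by
  intro a b ha hb hab hne
  set g : ℝ → ℝ := fun t => Real.sinh (k * t) ^ (n - 1) with hgdef
  have hgc : Continuous g := by fun_prop
  set G : ℝ → ℝ := fun t => ∫ s in (0:ℝ)..t, g s with hGdef
  have hGderiv : ∀ t, HasDerivAt G (g t) t := fun t =>
    intervalIntegral.integral_hasDerivAt_right (hgc.intervalIntegrable _ _)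
      (hgc.aestronglyMeasurable.stronglyMeasurableAtFilter) hgc.continuousAt
  have hGc : Continuous G := by
    have : Differentiable ℝ G := fun t => (hGderiv t).differentiableAt
    exact this.continuous
  set H : ℝ → ℝ := fun t => ∫ s in (0:ℝ)..t, G s with hHdef
  have hHderiv : ∀ t, HasDerivAt H (G t) t := fun t =>
    intervalIntegral.integral_hasDerivAt_right (hGc.intervalIntegrable _ _)
      (hGc.aestronglyMeasurable.stronglyMeasurableAtFilter) hGc.continuousAt
  have hHc : Continuous H := by
    have : Differentiable ℝ H := fun t => (hHderiv t).differentiableAt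
    exact this.continuous
  -- key: F(u,v) = H(u+v) - H v - H u
  have key : ∀ u v : ℝ, (∫ x in (0:ℝ)..u, ∫ y in (0:ℝ)..v, g (x + y))
      = H (u + v) - H v - H u := by
    intro u v
    have inner : ∀ x : ℝ, (∫ y in (0:ℝ)..v, g (x + y)) = G (x + v) - G x := by
      intro x
      have h2 : G (x + v) - G x = ∫ t in x..(x + v), g t :=
        intervalIntegral.integral_interval_sub_left (hgc.intervalIntegrable _ _)
          (hgc.intervalIntegrable _ _)
      have h0 : (∫ y in (0:ℝ)..v, g (x + y)) = ∫ y in (0:ℝ)..v, g (y + x) := by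
        simp only [add_comm]
      rw [h0, intervalIntegral.integral_comp_add_right g x, zero_add, h2, add_comm v x]
    rw [intervalIntegral.integral_congr (g := fun x => G (x + v) - G x)
      (fun x _ => inner x)]
    have hGi1 : IntervalIntegrable (fun x => G (x + v)) MeasureTheory.volume 0 u :=
      (hGc.comp (continuous_id.add continuous_const)).intervalIntegrable _ _
    have hGi2 : IntervalIntegrable G MeasureTheory.volume 0 u :=
      hGc.intervalIntegrable _ _
    rw [intervalIntegral.integral_sub hGi1 hGi2]
    have h3 : (∫ x in (0:ℝ)..u, G (x + v)) = ∫ t in (0 + v)..(u + v), G t :=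
      intervalIntegral.integral_comp_add_right G v
    have h4 : H (u + v) - H v = ∫ t in v..(u + v), G t :=
      intervalIntegral.integral_interval_sub_left (hGc.intervalIntegrable _ _)
        (hGc.intervalIntegrable _ _)
    rw [h3, zero_add, ← h4]
  -- strict convexity of H on [0, L]
  have hderivH : Set.EqOn (deriv H) G (Set.Ioo 0 L) := fun t _ => (hHderiv t).deriv
  have hmono : StrictMonoOn (deriv H) (interior (Set.Icc (0:ℝ) L)) := by
    rw [interior_Icc]
    intro t1 h1 t2 h2 hlt
    rw [hderivH h1, hderivH h2]
    have hsub : G t2 - G t1 = ∫ s in t1..t2, g s :=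
      intervalIntegral.integral_interval_sub_left (hgc.intervalIntegrable _ _)
        (hgc.intervalIntegrable _ _)
    have hpos : (0:ℝ) < ∫ s in t1..t2, g s := by
      apply intervalIntegral.intervalIntegral_pos_of_pos_on
        (hgc.intervalIntegrable _ _) _ hlt
      intro x hx
      have hx0 : 0 < x := lt_trans h1.1 hx.1
      exact pow_pos (Real.sinh_pos_iff.2 (mul_pos hk hx0)) _
    linarith [hsub ▸ hpos]
  have hconv : StrictConvexOn ℝ (Set.Icc (0:ℝ) L) H :=
    StrictMonoOn.strictConvexOn_of_deriv (convex_Icc 0 L) hHc.continuousOn hmono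
  -- apply
  have haL : a ≤ L := by linarith
  have hbL : b ≤ L := by linarith
  have hane : a ≠ b := by
    intro h
    apply hne
    simp only [Prod.mk.injEq]
    constructor <;> linarith
  have hineq := hconv.2 (Set.mem_Icc.2 ⟨ha, haL⟩) (Set.mem_Icc.2 ⟨hb, hbL⟩) hane
    (by norm_num : (0:ℝ) < 1/2) (by norm_num : (0:ℝ) < 1/2) (by norm_num)
  simp only [smul_eq_mul] at hineq
  have hmid : (1/2 : ℝ) * a + (1/2) * b = L / 2 := by linarith
  rw [hmid] at hineq
  have e1 : (∫ x in (0:ℝ)..a, ∫ y in (0:ℝ)..b, Real.sinh (k * (x + y)) ^ (n - 1))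
      = H (a + b) - H b - H a := key a b
  have e2 : (∫ x in (0:ℝ)..(L/2), ∫ y in (0:ℝ)..(L/2), Real.sinh (k * (x + y)) ^ (n - 1))
      = H (L/2 + L/2) - H (L/2) - H (L/2) := key (L/2) (L/2)
  rw [e1, e2, hab]
  have : L / 2 + L / 2 = L := by ring
  rw [this]
  linarith
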